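/- Let q, m, n, w, d₁, d₂ be positive integers with q ≤ A(n,d₁,w), where A(n,d₁,w) is the maximum size of a binary constant-weight code of length n, weight w and distance d₁. Then M(m, n, d₁·d₂, w) ≥ A_q(m, d₂), where A_q(m,d₂) is the maximum size of a q-ary code of length m with minimum distance d₂. -/

import Mathlib

open Finset

/-- Maximum size of a binary constant-weight code of length `n`, minimum
distance `d` and constant weight `w`. -/
noncomputable def Acw (n d w : ℕ) : ℕ :=
  sSup {k | ∃ C : Finset (Fin n → Bool),
    (∀ c ∈ C, (univ.filter fun i => c i = true).card = w) ∧
    (∀ u ∈ C, ∀ v ∈ C, u ≠ v → d ≤ hammingDist u v) ∧ C.card = k}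

/-- Maximum size of a `q`-ary code of length `m` with minimum distance `d`. -/
noncomputable def Aq (q m d : ℕ) : ℕ :=
  sSup {k | ∃ C : Finset (Fin m → Fin q),
    (∀ u ∈ C, ∀ v ∈ C, u ≠ v → d ≤ hammingDist u v) ∧ C.card = k}

/-- Maximum size of a multiply constant-weight code `MCWC(m,n,d,w)`. -/
noncomputable def Mmcwc (m n d w : ℕ) : ℕ :=
  sSup {k | ∃ C : Finset (Fin m × Fin n → Bool),
    (∀ c ∈ C, ∀ j : Fin m, (univ.filter fun i : Fin n => c (j, i) = true).card = w) ∧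
    (∀ u ∈ C, ∀ v ∈ C, u ≠ v → d ≤ hammingDist u v) ∧ C.card = k}

/-- Concatenation construction: if `q ≤ A(n,d₁,w)` then
`M(m,n,d₁·d₂,w) ≥ A_q(m,d₂)`. -/
theorem mcwc_concatenation_bound (q m n w d₁ d₂ : ℕ)
    (hq : 0 < q) (hm : 0 < m) (hn : 0 < n) (hw : 0 < w) (hd₁ : 0 < d₁) (hd₂ : 0 < d₂)
    (hqA : q ≤ Acw n d₁ w) :
    Aq q m d₂ ≤ Mmcwc m n (d₁ * d₂) w := by
  classical
  -- obtain an optimal inner constant-weight code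
  have hS₁ne : {k | ∃ C : Finset (Fin n → Bool),
      (∀ c ∈ C, (univ.filter fun i => c i = true).card = w) ∧
      (∀ u ∈ C, ∀ v ∈ C, u ≠ v → d₁ ≤ hammingDist u v) ∧ C.card = k}.Nonempty :=
    ⟨0, ∅, by simp, by simp, rfl⟩
  have hS₁bdd : BddAbove {k | ∃ C : Finset (Fin n → Bool),
      (∀ c ∈ C, (univ.filter fun i => c i = true).card = w) ∧
      (∀ u ∈ C, ∀ v ∈ C, u ≠ v → d₁ ≤ hammingDist u v) ∧ C.card = k} := by
    refine ⟨Fintype.card (Fin n → Bool), fun k hk => ?_⟩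
    obtain ⟨C, -, -, hcard⟩ := hk
    exact hcard ▸ C.card_le_univ
  have hmem := Nat.sSup_mem hS₁ne hS₁bdd
  obtain ⟨D, hDw, hDd, hDcard⟩ := hmem
  have hqD : q ≤ D.card := by rw [hDcard]; exact hqA
  -- the injective encoding map
  set φ : Fin q → (Fin n → Bool) :=
    fun k => (D.equivFin.symm (Fin.castLE hqD k) : Fin n → Bool) with hφ
  have φmem : ∀ k, φ k ∈ D := fun k => (D.equivFin.symm (Fin.castLE hqD k)).2
  have φinj : Function.Injective φ := by
    intro a b h
    have : D.equivFin.symm (Fin.castLE hqD a) = D.equivFin.symm (Fin.castLE hqD b) :=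
      Subtype.ext h
    have := D.equivFin.symm.injective this
    exact Fin.castLE_injective hqD this
  -- main bound
  refine csSup_le ⟨0, ∅, by simp, rfl⟩ ?_
  rintro k ⟨C, hCd, hCcard⟩
  -- concatenated code
  set F : (Fin m → Fin q) → (Fin m × Fin n → Bool) :=
    fun c x => φ (c x.1) x.2 with hF
  set C' : Finset (Fin m × Fin n → Bool) := C.image F with hC'
  -- distance bound for concatenated codewords
  have hdist : ∀ u v : Fin m → Fin q, d₂ ≤ hammingDist u v →
      d₁ * d₂ ≤ hammingDist (F u) (F v) := by
    intro u v huv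
    have hsplit : hammingDist (F u) (F v)
        = ∑ j : Fin m, (univ.filter fun i : Fin n => φ (u j) i ≠ φ (v j) i).card := by
      unfold hammingDist
      rw [Finset.card_eq_sum_card_fiberwise
        (f := fun x : Fin m × Fin n => x.1) (t := univ) (fun x _ => mem_univ _)]
      refine Finset.sum_congr rfl fun j _ => ?_
      refine Finset.card_nbij' (fun x => x.2) (fun i => (j, i)) ?_ ?_ ?_ ?_
      · rintro ⟨a, b⟩ hx
        simp only [mem_coe, mem_filter, mem_univ, true_and] at hx ⊢
        obtain ⟨h1, h2⟩ := hx
        subst h2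
        exact h1
      · intro i hi
        simp only [mem_coe, mem_filter, mem_univ, true_and] at hi ⊢
        exact ⟨hi, trivial⟩
      · rintro ⟨a, b⟩ hx
        simp only [mem_coe, mem_filter] at hx
        simp [hx.2]
      · intro i hi
        rfl
    rw [hsplit]
    calc d₁ * d₂ ≤ d₁ * hammingDist u v := Nat.mul_le_mul_left d₁ huv
      _ = ∑ _j ∈ (univ.filter fun j => u j ≠ v j), d₁ := by
          simp [hammingDist, Finset.sum_const, Nat.mul_comm]
      _ ≤ ∑ j ∈ (univ.filter fun j => u j ≠ v j),
            (univ.filter fun i : Fin n => φ (u j) i ≠ φ (v j) i).card := by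
          refine Finset.sum_le_sum fun j hj => ?_
          simp only [mem_filter, mem_univ, true_and] at hj
          have hne : φ (u j) ≠ φ (v j) := fun h => hj (φinj h)
          exact hDd _ (φmem _) _ (φmem _) hne
      _ ≤ ∑ j : Fin m, (univ.filter fun i : Fin n => φ (u j) i ≠ φ (v j) i).card :=
          Finset.sum_le_sum_of_subset (Finset.filter_subset _ _)
  -- membership of k in the MCWC set
  have hk' : k ∈ {k | ∃ C : Finset (Fin m × Fin n → Bool),
      (∀ c ∈ C, ∀ j : Fin m, (univ.filter fun i : Fin n => c (j, i) = true).card = w) ∧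
      (∀ u ∈ C, ∀ v ∈ C, u ≠ v → d₁ * d₂ ≤ hammingDist u v) ∧ C.card = k} := by
    refine ⟨C', ?_, ?_, ?_⟩
    · intro c hc j
      obtain ⟨u, hu, rfl⟩ := Finset.mem_image.mp hc
      exact hDw _ (φmem (u j))
    · intro a ha b hb hab
      obtain ⟨u, hu, rfl⟩ := Finset.mem_image.mp ha
      obtain ⟨v, hv, rfl⟩ := Finset.mem_image.mp hb
      have huv : u ≠ v := fun h => hab (by rw [h])
      exact hdist u v (hCd u hu v hv huv)
    · rw [hC', Finset.card_image_of_injOn, hCcard]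
      intro u hu v hv huv
      by_contra hne
      have := hdist u v (hCd u hu v hv hne)
      rw [huv, hammingDist_self] at this
      exact absurd this (Nat.not_le.mpr (Nat.mul_pos hd₁ hd₂))
  refine le_csSup ?_ hk'
  refine ⟨Fintype.card (Fin m × Fin n → Bool), fun k hk => ?_⟩
  obtain ⟨C, -, -, hcard⟩ := hk
  exact hcard ▸ C.card_le_univ
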